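/- arXiv:1710.03602 — 4 statements merged into one kernel-verified Lean document; each statement's English description precedes it below -/
import Mathlib

section
/- Let c : [0,T] → [0,+∞) be continuously differentiable with c(0) possibly zero, and suppose there is a constant K such that |c'(t)| ≤ K·c(t)^{1 - 1/(1+α)} for all t ∈ [0,T], where α ∈ (0,1]. Given ε > 0, define γ(t) := ψ_ε(c(t) - ε) with ψ_ε as above. Then γ is C¹, 0 ≤ γ(t) ≤ c(t), |c(t) - γ(t)| ≤ 2ε for all t, and |γ'(t)| ≤ K·c(t)·ε^{-1/(1+α)} for all t ∈ [0,T]. -/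
/-!
Write `ψ_ε = φ ∘ (· ⁺)` with `φ(y) = y - (2ε/π) arctan(πy/(2ε))`. Since `φ(0) = φ'(0) = 0`, the
function `ψ_ε` is `C¹` with derivative `1 - 1/(1 + (π x⁺/(2ε))²) ∈ [0, 1]`, and
`0 ≤ ψ_ε(x) ≤ x⁺ ≤ ψ_ε(x) + ε` because `0 ≤ arctan u ≤ min u (π/2)` for `u ≥ 0`. By the chain rule
`γ' = ψ_ε'(c - ε) c'` vanishes where `c ≤ ε`, while where `c > ε` it is bounded by
`|c'| ≤ K c^{1-δ} ≤ K c ε^{-δ}`, `δ = 1/(1+α)`.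
-/

open Real Set Topology

noncomputable def smoothPosPart (ε x : ℝ) : ℝ :=
  max x 0 - 2 / π * ε * arctan (π / 2 * (max x 0 / ε))

noncomputable def smoothPosPartDeriv (ε x : ℝ) : ℝ :=
  1 - 1 / (1 + (π / 2 * (max x 0 / ε)) ^ 2)

lemma arctan_le_self_of_nonneg {u : ℝ} (hu : 0 ≤ u) : arctan u ≤ u := by
  simpa only [tan_arctan] using le_tan (arctan_nonneg.mpr hu) (arctan_lt_pi_div_two u)

namespace smoothPosPart

variable {ε x : ℝ}

lemma of_nonpos (hx : x ≤ 0) : smoothPosPart ε x = 0 := by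
  simp [smoothPosPart, max_eq_right hx]

lemma of_nonneg (hx : 0 ≤ x) :
    smoothPosPart ε x = x - 2 / π * ε * arctan (π / 2 * (x / ε)) := by
  simp [smoothPosPart, max_eq_left hx]

lemma nonneg (hε : 0 ≤ ε) : 0 ≤ smoothPosPart ε x := by
  rcases hε.eq_or_lt with rfl | hε
  · simp [smoothPosPart]
  have hu : 0 ≤ π / 2 * (max x 0 / ε) := by positivity
  have hcancel : 2 / π * ε * (π / 2 * (max x 0 / ε)) = max x 0 := by field_simp
  have := mul_le_mul_of_nonneg_left (arctan_le_self_of_nonneg hu)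
    (by positivity : 0 ≤ 2 / π * ε)
  rw [smoothPosPart]
  linarith

lemma le_max_zero (hε : 0 ≤ ε) : smoothPosPart ε x ≤ max x 0 :=
  sub_le_self _ (mul_nonneg (by positivity) (arctan_nonneg.mpr (by positivity)))

lemma max_zero_sub_le (hε : 0 ≤ ε) : max x 0 - smoothPosPart ε x ≤ ε := by
  have := mul_le_mul_of_nonneg_left (arctan_lt_pi_div_two (π / 2 * (max x 0 / ε))).le
    (by positivity : 0 ≤ 2 / π * ε)
  have hπ : 2 / π * ε * (π / 2) = ε := by field_simp
  rw [smoothPosPart]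
  linarith

lemma sub_le (hε : 0 ≤ ε) (hx : 0 ≤ x) : smoothPosPart ε (x - ε) ≤ x :=
  (le_max_zero hε).trans (max_le (by linarith) hx)

lemma abs_sub_sub_le (hε : 0 ≤ ε) (hx : 0 ≤ x) : |x - smoothPosPart ε (x - ε)| ≤ 2 * ε := by
  have h₁ := max_zero_sub_le (x := x - ε) hε
  have h₂ := sub_le hε hx
  rw [abs_le]
  constructor <;> linarith [le_max_left (x - ε) 0]

end smoothPosPart

namespace smoothPosPartDeriv

variable {ε x : ℝ}

lemma of_nonpos (hx : x ≤ 0) : smoothPosPartDeriv ε x = 0 := by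
  simp [smoothPosPartDeriv, max_eq_right hx]

lemma nonneg : 0 ≤ smoothPosPartDeriv ε x := by
  rw [smoothPosPartDeriv, sub_nonneg, div_le_one (by positivity)]
  nlinarith [sq_nonneg (π / 2 * (max x 0 / ε))]

lemma le_one : smoothPosPartDeriv ε x ≤ 1 := by
  rw [smoothPosPartDeriv, sub_le_self_iff]
  positivity

lemma continuous : Continuous (smoothPosPartDeriv ε) :=
  continuous_const.sub (continuous_const.div (by fun_prop) fun _ => by positivity)

end smoothPosPartDeriv

lemma hasDerivAt_sub_arctan {ε : ℝ} (hε : ε ≠ 0) (x : ℝ) :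
    HasDerivAt (fun y => y - 2 / π * ε * arctan (π / 2 * (y / ε)))
      (1 - 1 / (1 + (π / 2 * (x / ε)) ^ 2)) x := by
  have hlin : HasDerivAt (fun y : ℝ => π / 2 * (y / ε)) (π / 2 * (1 / ε)) x := by
    simpa using ((hasDerivAt_id x).div_const ε).const_mul (π / 2)
  refine ((hasDerivAt_id' x).sub
    (((hasDerivAt_arctan _).comp x hlin).const_mul (2 / π * ε))).congr_deriv ?_
  field_simp

lemma hasDerivAt_smoothPosPart {ε : ℝ} (hε : ε ≠ 0) (x : ℝ) :
    HasDerivAt (smoothPosPart ε) (smoothPosPartDeriv ε x) x := by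
  have hcont : Continuous (smoothPosPart ε) := by unfold smoothPosPart; fun_prop
  refine hasDerivAt_of_hasDerivAt_of_ne' (x := 0) (fun y hy => ?_) hcont.continuousAt
    smoothPosPartDeriv.continuous.continuousAt x
  rcases hy.lt_or_gt with hy | hy
  · have hloc : smoothPosPart ε =ᶠ[𝓝 y] fun _ => 0 := by
      filter_upwards [Iio_mem_nhds hy] with z hz using smoothPosPart.of_nonpos hz.le
    rw [smoothPosPartDeriv.of_nonpos hy.le]
    exact (hasDerivAt_const y 0).congr_of_eventuallyEq hloc
  · have hloc : smoothPosPart ε =ᶠ[𝓝 y] fun z => z - 2 / π * ε * arctan (π / 2 * (z / ε)) := by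
      filter_upwards [Ioi_mem_nhds hy] with z hz using smoothPosPart.of_nonneg hz.le
    rw [smoothPosPartDeriv, max_eq_left hy.le]
    exact (hasDerivAt_sub_arctan hε y).congr_of_eventuallyEq hloc

lemma contDiff_smoothPosPart {ε : ℝ} (hε : ε ≠ 0) : ContDiff ℝ 1 (smoothPosPart ε) := by
  have hderiv : deriv (smoothPosPart ε) = smoothPosPartDeriv ε :=
    funext fun x => (hasDerivAt_smoothPosPart hε x).deriv
  rw [contDiff_one_iff_deriv, hderiv]
  exact ⟨fun x => (hasDerivAt_smoothPosPart hε x).differentiableAt,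
    smoothPosPartDeriv.continuous⟩

lemma rpow_one_sub_le_mul_rpow_neg {ε x δ : ℝ} (hε : 0 < ε) (hεx : ε ≤ x) (hδ : 0 ≤ δ) :
    x ^ (1 - δ) ≤ x * ε ^ (-δ) := by
  have hx : 0 < x := hε.trans_le hεx
  rw [sub_eq_add_neg, rpow_add hx, rpow_one]
  exact mul_le_mul_of_nonneg_left (rpow_le_rpow_of_nonpos hε hεx (neg_nonpos.mpr hδ)) hx.le

lemma abs_smoothPosPartDeriv_mul_le {ε x δ K d : ℝ} (hε : 0 < ε) (hx : 0 ≤ x) (hδ : 0 ≤ δ)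
    (hd : |d| ≤ K * x ^ (1 - δ)) :
    |smoothPosPartDeriv ε (x - ε) * d| ≤ K * x * ε ^ (-δ) := by
  rcases hx.eq_or_lt with rfl | hx
  · simp [smoothPosPartDeriv.of_nonpos (neg_nonpos.mpr hε.le)]
  have hK : 0 ≤ K := nonneg_of_mul_nonneg_left ((abs_nonneg d).trans hd) (rpow_pos_of_pos hx _)
  rcases le_or_gt x ε with hxε | hεx
  · rw [smoothPosPartDeriv.of_nonpos (sub_nonpos.mpr hxε), zero_mul, abs_zero]
    positivity
  calc |smoothPosPartDeriv ε (x - ε) * d|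
      = smoothPosPartDeriv ε (x - ε) * |d| := by
        rw [abs_mul, abs_of_nonneg smoothPosPartDeriv.nonneg]
    _ ≤ |d| := mul_le_of_le_one_left (abs_nonneg d) smoothPosPartDeriv.le_one
    _ ≤ K * x ^ (1 - δ) := hd
    _ ≤ K * x * ε ^ (-δ) := by
        rw [mul_assoc]
        exact mul_le_mul_of_nonneg_left (rpow_one_sub_le_mul_rpow_neg hε hεx.le hδ) hK

/-- At the endpoints `deriv c` may be the junk value `0`; the one-sided derivative is controlled
by continuity of `derivWithin c (Icc a b)` from the interior. -/
lemma abs_derivWithin_Icc_le {a b : ℝ} (hab : a < b) {c f : ℝ → ℝ}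
    (hc : ContDiffOn ℝ 1 c (Icc a b)) (hf : ContinuousOn f (Icc a b))
    (hbound : ∀ t ∈ Ioo a b, |deriv c t| ≤ f t) {t : ℝ} (ht : t ∈ Icc a b) :
    |derivWithin c (Icc a b) t| ≤ f t := by
  have hclosure : closure (Ioo a b) = Icc a b := closure_Ioo hab.ne
  refine le_on_closure (f := fun s => |derivWithin c (Icc a b) s|) (fun s hs => ?_)
    (hclosure ▸ (hc.continuousOn_derivWithin (uniqueDiffOn_Icc hab) le_rfl).abs)
    (hclosure ▸ hf) (hclosure ▸ ht)
  rw [derivWithin_of_mem_nhds (Icc_mem_nhds hs.1 hs.2)]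
  exact hbound s hs

lemma abs_deriv_le_of_hasDerivWithinAt {f : ℝ → ℝ} {f' t : ℝ} {s : Set ℝ}
    (hs : UniqueDiffWithinAt ℝ s t) (hf : HasDerivWithinAt f f' s t) : |deriv f t| ≤ |f'| := by
  by_cases hdiff : DifferentiableAt ℝ f t
  · rw [← hdiff.derivWithin hs, hf.derivWithin hs]
  · rw [deriv_zero_of_not_differentiableAt hdiff, abs_zero]
    exact abs_nonneg _

theorem stmt1 (T α ε K : ℝ) (hT : 0 < T) (hα : α ∈ Set.Ioc (0:ℝ) 1) (hε : 0 < ε)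
    (c : ℝ → ℝ) (hc1 : ContDiffOn ℝ 1 c (Set.Icc 0 T))
    (hc0 : ∀ t ∈ Set.Icc (0:ℝ) T, 0 ≤ c t)
    (hK : ∀ t ∈ Set.Icc (0:ℝ) T, |deriv c t| ≤ K * (c t) ^ (1 - 1/(1+α)))
    (ψ : ℝ → ℝ)
    (hψ0 : ∀ x ≤ (0:ℝ), ψ x = 0)
    (hψ1 : ∀ x ≥ (0:ℝ), ψ x = x - (2 / π) * ε * Real.arctan (π / 2 * (x / ε)))
    (γ : ℝ → ℝ) (hγ : ∀ t, γ t = ψ (c t - ε)) :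
    ContDiffOn ℝ 1 γ (Set.Icc 0 T) ∧
    (∀ t ∈ Set.Icc (0:ℝ) T, 0 ≤ γ t ∧ γ t ≤ c t) ∧
    (∀ t ∈ Set.Icc (0:ℝ) T, |c t - γ t| ≤ 2 * ε) ∧
    (∀ t ∈ Set.Icc (0:ℝ) T, |deriv γ t| ≤ K * c t * ε ^ (-(1/(1+α)))) := by
  have hψ : ψ = smoothPosPart ε := funext fun x => by
    rcases le_total x 0 with hx | hx
    · rw [hψ0 x hx, smoothPosPart.of_nonpos hx]
    · rw [hψ1 x hx, smoothPosPart.of_nonneg hx]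
  obtain rfl : γ = fun t => smoothPosPart ε (c t - ε) := funext fun t => hψ ▸ hγ t
  have hδ : 0 ≤ 1 / (1 + α) := by have := hα.1; positivity
  have hδ1 : 1 / (1 + α) ≤ 1 := by rw [div_le_one] <;> linarith [hα.1]
  refine ⟨(contDiff_smoothPosPart hε.ne').comp_contDiffOn (hc1.sub contDiffOn_const),
    fun t ht => ⟨smoothPosPart.nonneg hε.le, ?_⟩, fun t ht => ?_, fun t ht => ?_⟩
  · exact smoothPosPart.sub_le hε.le (hc0 t ht)
  · exact smoothPosPart.abs_sub_sub_le hε.le (hc0 t ht)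
  · have hcd : HasDerivWithinAt (fun s => smoothPosPart ε (c s - ε))
        (smoothPosPartDeriv ε (c t - ε) * derivWithin c (Icc 0 T) t) (Icc 0 T) t :=
      (hasDerivAt_smoothPosPart hε.ne' _).comp_hasDerivWithinAt t
        (((hc1.differentiableOn one_ne_zero) t ht).hasDerivWithinAt.sub_const ε)
    have hcont : ContinuousOn (fun s => K * c s ^ (1 - 1 / (1 + α))) (Icc 0 T) :=
      continuousOn_const.mul (hc1.continuousOn.rpow_const fun _ _ => Or.inr (sub_nonneg.mpr hδ1))
    refine (abs_deriv_le_of_hasDerivWithinAt (uniqueDiffOn_Icc hT t ht) hcd).trans ?_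
    exact abs_smoothPosPartDeriv_mul_le hε (hc0 t ht) hδ
      (abs_derivWithin_Icc_le hT hc1 hcont (fun s hs => hK s (Ioo_subset_Icc_self hs)) ht)
end

section
/- For real parameters m > 0, ε > 0, λ > 0, δ ≥ 0, σ ∈ ℝ, define b(t) := (2mλε - δλ^{2σ})t - ε sin(2mλt), w(t) := sin(mλt)·exp(b(t)), and γ(t) := m² + δ²/λ^{2-4σ} - 16m²ε² sin⁴(mλt) - 8m²ε sin(2mλt). Then w satisfies the differential equation w''(t) + 2δλ^{2σ} w'(t) + λ² γ(t) w(t) = 0 for all t ∈ ℝ. -/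
/-!
Write `w = u · exp b` with `u = sin (k t)`, `k = m λ`, `D = δ λ^{2σ}`. Then
`w'' + 2 D w' = (u'' + 2 u' (b' + D) + u (b'' + b'^2 + 2 D b')) exp b`, and the choice of `b`
makes `b' + D = 2 k ε (1 - cos (2 k t)) = 4 k ε sin² (k t)`. With `sin (2 k t) = 2 sin cos` every
term is a polynomial in `sin (k t)` and `cos (k t)`, and `λ² γ` is exactly what cancels the rest;
`λ² δ² / λ^{2-4σ} = D²` supplies the damping term.
-/

open Real

theorem hasDerivAt_mul_exp {u β : ℝ → ℝ} {u' β' t : ℝ} (hu : HasDerivAt u u' t)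
    (hβ : HasDerivAt β β' t) :
    HasDerivAt (fun t => u t * exp (β t)) ((u' + u t * β') * exp (β t)) t :=
  (hu.mul hβ.exp).congr_deriv (by ring)

theorem deriv_deriv_mul_exp {u u' u'' β β' β'' : ℝ → ℝ}
    (hu : ∀ t, HasDerivAt u (u' t) t) (hu' : ∀ t, HasDerivAt u' (u'' t) t)
    (hβ : ∀ t, HasDerivAt β (β' t) t) (hβ' : ∀ t, HasDerivAt β' (β'' t) t) (t : ℝ) :
    deriv (deriv fun t => u t * exp (β t)) t
      = (u'' t + 2 * u' t * β' t + u t * (β'' t + β' t ^ 2)) * exp (β t) := by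
  have hderiv : deriv (fun t => u t * exp (β t)) = fun t => (u' t + u t * β' t) * exp (β t) :=
    funext fun t => (hasDerivAt_mul_exp (hu t) (hβ t)).deriv
  rw [hderiv]
  exact ((hasDerivAt_mul_exp ((hu' t).add ((hu t).mul (hβ' t))) (hβ t)).congr_deriv
    (by simp only [Pi.add_apply, Pi.mul_apply]; ring)).deriv

theorem hasDerivAt_sin_const_mul (k t : ℝ) :
    HasDerivAt (fun t => sin (k * t)) (k * cos (k * t)) t :=
  (((hasDerivAt_id t).const_mul k).sin).congr_deriv (by simp [mul_comm])

theorem hasDerivAt_cos_const_mul (k t : ℝ) :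
    HasDerivAt (fun t => cos (k * t)) (-(k * sin (k * t))) t :=
  (((hasDerivAt_id t).const_mul k).cos).congr_deriv (by simp [mul_comm])

theorem hasDerivAt_const_mul_sub_sin (c ε k t : ℝ) :
    HasDerivAt (fun t => c * t - ε * sin (k * t)) (c - ε * (k * cos (k * t))) t :=
  (((hasDerivAt_id t).const_mul c).sub ((hasDerivAt_sin_const_mul k t).const_mul ε)).congr_deriv
    (by simp)

theorem sq_mul_div_rpow_two_sub_four_mul {l : ℝ} (hl : 0 < l) (δ σ : ℝ) :
    l ^ 2 * (δ ^ 2 / l ^ (2 - 4 * σ)) = (δ * l ^ (2 * σ)) ^ 2 := by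
  have h : l ^ (2 - 4 * σ) * (l ^ (2 * σ)) ^ 2 = l ^ 2 := by
    rw [sq, ← rpow_add hl, ← rpow_add hl, ← rpow_natCast]
    congr 1
    ring
  rw [← h]
  field_simp

theorem stmt9_general (m ε l δ σ : ℝ) (hl : 0 < l)
    (b w γ : ℝ → ℝ)
    (hb : ∀ t, b t = (2 * m * l * ε - δ * l ^ (2*σ)) * t - ε * Real.sin (2 * m * l * t))
    (hw : ∀ t, w t = Real.sin (m * l * t) * Real.exp (b t))
    (hγ : ∀ t, γ t = m ^ 2 + δ ^ 2 / l ^ (2 - 4*σ)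
        - 16 * m ^ 2 * ε ^ 2 * Real.sin (m * l * t) ^ 4
        - 8 * m ^ 2 * ε * Real.sin (2 * m * l * t)) :
    ∀ t : ℝ, deriv (deriv w) t + 2 * δ * l ^ (2*σ) * deriv w t + l ^ 2 * γ t * w t = 0 := by
  intro t
  set c := 2 * m * l * ε - δ * l ^ (2*σ)
  have hb' : ∀ t, HasDerivAt b (c - ε * (2 * m * l * cos (2 * m * l * t))) t := by
    rw [funext hb]
    exact hasDerivAt_const_mul_sub_sin _ _ _
  have hb'' : ∀ t, HasDerivAt (fun t => c - ε * (2 * m * l * cos (2 * m * l * t)))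
      (-(ε * (2 * m * l * -(2 * m * l * sin (2 * m * l * t))))) t :=
    fun t => (((hasDerivAt_cos_const_mul _ t).const_mul _).const_mul ε).const_sub _
  rw [funext hw, deriv_deriv_mul_exp (hasDerivAt_sin_const_mul _)
    (fun t => (hasDerivAt_cos_const_mul _ t).const_mul _) hb' hb'' t,
    (hasDerivAt_mul_exp (hasDerivAt_sin_const_mul _ t) (hb' t)).deriv, hγ t]
  have h2 : 2 * m * l * t = 2 * (m * l * t) := by ring
  rw [h2, sin_two_mul, cos_two_mul_eq_one_sub]
  linear_combination sin (m * l * t) * exp (b t) * sq_mul_div_rpow_two_sub_four_mul hl δ σ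

theorem stmt9 (m ε l δ σ : ℝ) (hm : 0 < m) (hε : 0 < ε) (hl : 0 < l) (hδ : 0 ≤ δ)
    (b w γ : ℝ → ℝ)
    (hb : ∀ t, b t = (2 * m * l * ε - δ * l ^ (2*σ)) * t - ε * Real.sin (2 * m * l * t))
    (hw : ∀ t, w t = Real.sin (m * l * t) * Real.exp (b t))
    (hγ : ∀ t, γ t = m ^ 2 + δ ^ 2 / l ^ (2 - 4*σ)
        - 16 * m ^ 2 * ε ^ 2 * Real.sin (m * l * t) ^ 4
        - 8 * m ^ 2 * ε * Real.sin (2 * m * l * t)) :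
    ∀ t : ℝ, deriv (deriv w) t + 2 * δ * l ^ (2*σ) * deriv w t + l ^ 2 * γ t * w t = 0 :=
  stmt9_general m ε l δ σ hl b w γ hb hw hγ
end

section
/- Let θ ∈ (0,1), let (λ_n) be an increasing sequence with λ_n ≥ 1 and λ_n^θ ≥ 5 λ_{n-1}^θ for all n ≥ 1. Define t_n := 4π/λ_n^θ, s_n := (π/λ_n^θ)·⌊2λ_n^θ/λ_{n-1}^θ⌋, t_n' := t_n - π/λ_n^θ, s_n' := s_n + π/λ_n^θ. Then for all n: s_{n+1}' < t_n' < t_n < s_n < s_n', s_n ≥ π/λ_{n-1}^θ, s_n - t_n ≥ π/λ_{n-1}^θ, and t_n' - s_{n+1}' ≥ 4π/(5λ_n^θ). -/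
open Real

set_option maxHeartbeats 1000000 in
theorem stmt11 (θ : ℝ) (hθ : θ ∈ Set.Ioo (0:ℝ) 1)
    (lam : ℕ → ℝ) (hlam1 : ∀ n, 1 ≤ lam n) (hmono : StrictMono lam)
    (hgrow : ∀ n, lam (n+1) ^ θ ≥ 5 * lam n ^ θ)
    (t s t' s' : ℕ → ℝ)
    (ht : ∀ n, t n = 4 * π / lam n ^ θ)
    (hs : ∀ n, s (n+1) = π / lam (n+1) ^ θ * (⌊2 * lam (n+1) ^ θ / lam n ^ θ⌋ : ℤ))
    (ht' : ∀ n, t' n = t n - π / lam n ^ θ)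
    (hs' : ∀ n, s' (n+1) = s (n+1) + π / lam (n+1) ^ θ) :
    ∀ n : ℕ, s' (n+2) < t' (n+1) ∧ t' (n+1) < t (n+1) ∧ t (n+1) < s (n+1) ∧
      s (n+1) < s' (n+1) ∧
      s (n+1) ≥ π / lam n ^ θ ∧
      s (n+1) - t (n+1) ≥ π / lam n ^ θ ∧
      t' (n+1) - s' (n+2) ≥ 4 * π / (5 * lam (n+1) ^ θ) := by
  obtain ⟨hθ0, hθ1⟩ := hθ
  intro n
  set a := lam n ^ θ with hA
  set b := lam (n+1) ^ θ with hB
  set c := lam (n+2) ^ θ with hC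
  have ha : (1:ℝ) ≤ a := Real.one_le_rpow (hlam1 n) hθ0.le
  have hb : (1:ℝ) ≤ b := Real.one_le_rpow (hlam1 (n+1)) hθ0.le
  have hc : (1:ℝ) ≤ c := Real.one_le_rpow (hlam1 (n+2)) hθ0.le
  have ha0 : (0:ℝ) < a := lt_of_lt_of_le one_pos ha
  have hb0 : (0:ℝ) < b := lt_of_lt_of_le one_pos hb
  have hc0 : (0:ℝ) < c := lt_of_lt_of_le one_pos hc
  have hb5 : b ≥ 5 * a := hgrow n
  have hc5 : c ≥ 5 * b := hgrow (n+1)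
  have hπ := Real.pi_pos
  set m : ℤ := ⌊2 * b / a⌋ with hm
  set m' : ℤ := ⌊2 * c / b⌋ with hm'
  have hm1 : (m : ℝ) * a ≤ 2 * b := by
    have := Int.floor_le (2 * b / a)
    rw [← hm] at this
    calc (m:ℝ) * a ≤ (2*b/a) * a := by nlinarith
    _ = 2 * b := by field_simp
  have hm2 : 2 * b - a < (m : ℝ) * a := by
    have := Int.sub_one_lt_floor (2 * b / a)
    rw [← hm] at this
    have h2 : 2 * b / a - 1 < (m:ℝ) := this
    nlinarith [(div_lt_iff₀ ha0).mp (show 2*b/a < (m:ℝ)+1 by linarith)]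
  have hm'1 : (m' : ℝ) * b ≤ 2 * c := by
    have := Int.floor_le (2 * c / b)
    rw [← hm'] at this
    calc (m':ℝ) * b ≤ (2*c/b) * b := by nlinarith
    _ = 2 * c := by field_simp
  have hm'2 : 2 * c - b < (m' : ℝ) * b := by
    have := Int.sub_one_lt_floor (2 * c / b)
    rw [← hm'] at this
    have h2 : 2 * c / b - 1 < (m':ℝ) := this
    nlinarith [(div_lt_iff₀ hb0).mp (show 2*c/b < (m':ℝ)+1 by linarith)]
  have hS : s (n+1) = π / b * (m : ℝ) := by rw [hs n]
  have hS' : s (n+2) = π / c * (m' : ℝ) := by rw [hs (n+1)]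
  have hT : t (n+1) = 4 * π / b := ht (n+1)
  have hT' : t' (n+1) = 4 * π / b - π / b := by rw [ht' (n+1), hT]
  have hSp : s' (n+1) = π / b * (m : ℝ) + π / b := by rw [hs' n, hS]
  have hSp' : s' (n+2) = π / c * (m' : ℝ) + π / c := by rw [hs' (n+1), hS']
  -- note m*a > 2b - a ≥ 10a - a = 9a so m ≥ 9 (as reals m > 9); similarly m' 
  clear_value m m'
  clear_value a b c
  have hm9 : (9:ℝ) < (m:ℝ) := by nlinarith
  have hπb : (0:ℝ) < π * b := mul_pos hπ hb0
  have hπcb : (0:ℝ) < π * (c * b) := mul_pos hπ (mul_pos hc0 hb0)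
  refine ⟨?_, ?_, ?_, ?_, ?_, ?_, ?_⟩
  · rw [hSp', hT']
    rw [div_mul_eq_mul_div, div_add_div _ _ (ne_of_gt hc0) (ne_of_gt hc0),
        div_sub_div _ _ (ne_of_gt hb0) (ne_of_gt hb0),
        div_lt_div_iff₀ (by positivity) (by positivity)]
    nlinarith [mul_le_mul_of_nonneg_left hm'1 hπcb.le,
      mul_le_mul_of_nonneg_left hc5 hπcb.le,
      mul_pos hπ (mul_pos (mul_pos hc0 hc0) hb0)]
  · rw [hT', hT]; nlinarith [div_pos hπ hb0]
  · rw [hT, hS, div_mul_eq_mul_div, div_lt_div_iff₀ hb0 hb0]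
    nlinarith [mul_pos hπ (mul_pos hb0 hb0)]
  · rw [hS, hSp]; nlinarith [div_pos hπ hb0]
  · rw [hS, div_mul_eq_mul_div, ge_iff_le, div_le_div_iff₀ ha0 hb0]
    nlinarith [mul_lt_mul_of_pos_left hm2 hπb, mul_le_mul_of_nonneg_left hb5 hπb.le, mul_pos hπ (mul_pos hb0 ha0)]
  · rw [hS, hT, div_mul_eq_mul_div, div_sub_div _ _ (ne_of_gt hb0) (ne_of_gt hb0),
        ge_iff_le, div_le_div_iff₀ ha0 (by positivity)]
    nlinarith [mul_lt_mul_of_pos_left hm2 hπb, mul_le_mul_of_nonneg_left hb5 hπb.le, mul_pos hπ (mul_pos hb0 ha0)]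
  · rw [hT', hSp']
    rw [div_mul_eq_mul_div, div_add_div _ _ (ne_of_gt hc0) (ne_of_gt hc0),
        div_sub_div _ _ (ne_of_gt hb0) (ne_of_gt hb0), ge_iff_le,
        div_sub_div _ _ (by positivity : (b*b:ℝ) ≠ 0) (by positivity : (c*c:ℝ) ≠ 0),
        div_le_div_iff₀ (by positivity) (by positivity)]
    nlinarith [mul_le_mul_of_nonneg_left hm'1 (by positivity : (0:ℝ) ≤ π*(c*(b*b))),
      mul_le_mul_of_nonneg_left hc5 (by positivity : (0:ℝ) ≤ π*(c*(b*b))),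
      mul_pos hπ (mul_pos (mul_pos hc0 hc0) (mul_pos hb0 hb0))]
end

section
/- Let (s_n') be a strictly decreasing sequence in (0, s₀'] with s_n' → 0, and let g : (0, s₀'] → ℝ be a function that is α-Hölder continuous with uniform constant L on each interval [s_{n+1}', s_n'] and satisfies |g(s_i') - g(s_j')| ≤ |s_i' - s_j'|^α for all i, j. Suppose also g(t) → ℓ as t → 0⁺ for some ℓ ∈ ℝ. Then the extension of g to [0, s₀'] with g(0) := ℓ is α-Hölder continuous on [0, s₀'] with constant at most 2L + 1. -/
theorem stmt18 (α L ℓ : ℝ) (hα : α ∈ Set.Ioc (0:ℝ) 1) (hL : 0 ≤ L)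
    (s' : ℕ → ℝ) (hanti : StrictAnti s') (hpos : ∀ n, 0 < s' n)
    (hlim : Filter.Tendsto s' Filter.atTop (nhds 0))
    (g : ℝ → ℝ)
    (hHolder : ∀ n : ℕ, ∀ x ∈ Set.Icc (s' (n+1)) (s' n), ∀ y ∈ Set.Icc (s' (n+1)) (s' n),
      |g y - g x| ≤ L * |y - x| ^ α)
    (hend : ∀ i j : ℕ, |g (s' i) - g (s' j)| ≤ |s' i - s' j| ^ α)
    (hglim : Filter.Tendsto g (nhdsWithin 0 (Set.Ioi 0)) (nhds ℓ))
    (G : ℝ → ℝ) (hG0 : G 0 = ℓ) (hG : ∀ t ∈ Set.Ioc (0:ℝ) (s' 0), G t = g t) :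
    ∀ x ∈ Set.Icc (0:ℝ) (s' 0), ∀ y ∈ Set.Icc (0:ℝ) (s' 0),
      |G y - G x| ≤ (2 * L + 1) * |y - x| ^ α := by
  classical
  obtain ⟨hα0, hα1⟩ := hα
  have hC : (0:ℝ) ≤ 2 * L + 1 := by linarith
  have locate : ∀ x ∈ Set.Ioc (0:ℝ) (s' 0), ∃ n, s' (n+1) ≤ x ∧ x ≤ s' n := by
    intro x hx
    have hex : ∃ m, s' m < x := (hlim.eventually (gt_mem_nhds hx.1)).exists
    have hmlt : s' (Nat.find hex) < x := Nat.find_spec hex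
    have hm0 : Nat.find hex ≠ 0 := by
      intro h; rw [h] at hmlt; exact absurd hx.2 (not_le.2 hmlt)
    obtain ⟨n, hn⟩ := Nat.exists_eq_succ_of_ne_zero hm0
    refine ⟨n, ?_, ?_⟩
    · rw [hn] at hmlt; exact hmlt.le
    · have := Nat.find_min hex (m := n) (by omega)
      exact not_lt.1 this
  have key : ∀ x ∈ Set.Ioc (0:ℝ) (s' 0), ∀ y ∈ Set.Ioc (0:ℝ) (s' 0), x ≤ y →
      |g y - g x| ≤ (2 * L + 1) * (y - x) ^ α := by
    intro x hx y hy hxy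
    obtain ⟨j, hj1, hj2⟩ := locate x hx
    obtain ⟨i, hi1, hi2⟩ := locate y hy
    have hyx0 : 0 ≤ y - x := by linarith
    rcases eq_or_lt_of_le hxy with rfl | hlt
    · simp [Real.zero_rpow hα0.ne', mul_nonneg hC]
    rcases lt_or_ge j i with hji | hij
    · -- impossible-ish: forces y ≤ x
      exfalso
      have : s' i ≤ s' (j+1) := hanti.antitone (by omega)
      linarith
    rcases eq_or_lt_of_le hij with rfl | hlt2
    · -- same interval
      have h := hHolder i x ⟨hj1, hj2⟩ y ⟨hi1, hi2⟩
      have habs : |y - x| = y - x := abs_of_nonneg hyx0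
      rw [habs] at h
      refine h.trans (mul_le_mul_of_nonneg_right (by linarith)
        (Real.rpow_nonneg hyx0 α))
    · -- i < j : chain through s' (i+1) and s' j
      have hij1 : i + 1 ≤ j := hlt2
      have hsj : s' j ≤ s' (i+1) := hanti.antitone hij1
      have hx_sj : x ≤ s' j := hj2
      have hsi1_y : s' (i+1) ≤ y := hi1
      have t1 : |g y - g (s' (i+1))| ≤ L * (y - x) ^ α := by
        have h := hHolder i (s' (i+1)) ⟨le_refl _, (hanti (Nat.lt_succ_self i)).le⟩ y ⟨hi1, hi2⟩
        have h2 : |y - s' (i+1)| ≤ y - x := by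
          rw [abs_of_nonneg (by linarith)]; linarith
        refine h.trans (mul_le_mul_of_nonneg_left ?_ hL)
        exact Real.rpow_le_rpow (abs_nonneg _) h2 hα0.le
      have t2 : |g (s' (i+1)) - g (s' j)| ≤ (y - x) ^ α := by
        refine (hend (i+1) j).trans ?_
        have h2 : |s' (i+1) - s' j| ≤ y - x := by
          rw [abs_of_nonneg (by linarith)]; linarith
        exact Real.rpow_le_rpow (abs_nonneg _) h2 hα0.le
      have t3 : |g (s' j) - g x| ≤ L * (y - x) ^ α := by
        have h := hHolder j x ⟨hj1, hj2⟩ (s' j) ⟨(hanti (Nat.lt_succ_self j)).le, le_refl _⟩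
        have h2 : |s' j - x| ≤ y - x := by
          rw [abs_of_nonneg (by linarith)]; linarith
        refine h.trans (mul_le_mul_of_nonneg_left ?_ hL)
        exact Real.rpow_le_rpow (abs_nonneg _) h2 hα0.le
      calc |g y - g x| ≤ |g y - g (s' (i+1))| + |g (s' (i+1)) - g (s' j)| + |g (s' j) - g x| := by
            have := abs_sub_le (g y) (g (s' (i+1))) (g x)
            have := abs_sub_le (g (s' (i+1))) (g (s' j)) (g x)
            linarith [abs_sub_le (g y) (g (s' (i+1))) (g x),
              abs_sub_le (g (s' (i+1))) (g (s' j)) (g x)]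
        _ ≤ L * (y - x) ^ α + (y - x) ^ α + L * (y - x) ^ α := by linarith
        _ = (2 * L + 1) * (y - x) ^ α := by ring
  have main : ∀ x ∈ Set.Icc (0:ℝ) (s' 0), ∀ y ∈ Set.Icc (0:ℝ) (s' 0), x ≤ y →
      |G y - G x| ≤ (2 * L + 1) * |y - x| ^ α := by
    intro x hx y hy hxy
    rcases eq_or_lt_of_le hy.1 with hy0 | hy0
    · -- y = 0 hence x = 0
      have hx0 : x = 0 := le_antisymm (hxy.trans hy0.symm.le) hx.1
      subst hx0; rw [← hy0]
      simp [Real.zero_rpow hα0.ne']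
    · have hGy : G y = g y := hG y ⟨hy0, hy.2⟩
      rcases eq_or_lt_of_le hx.1 with hx0 | hx0
      · -- x = 0
        subst hx0  -- fails if hx0 : 0 = x? it's 0 = x, so subst works on x
        rw [hG0, hGy, sub_zero, abs_of_pos hy0]
        have hten : Filter.Tendsto (fun t => |g y - g t|) (nhdsWithin 0 (Set.Ioi 0))
            (nhds |g y - ℓ|) := (Filter.Tendsto.sub tendsto_const_nhds hglim).abs
        refine le_of_tendsto hten ?_
        have hc : (0:ℝ) < min y (s' 0) := lt_min hy0 (hpos 0)
        filter_upwards [Ioo_mem_nhdsGT_of_mem (Set.mem_Ico.2 ⟨le_refl 0, hc⟩)] with t ht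
        have ht1 : 0 < t := ht.1
        have ht2 : t < y := ht.2.trans_le (min_le_left _ _)
        have ht3 : t ≤ s' 0 := (ht.2.trans_le (min_le_right _ _)).le
        have h := key t ⟨ht1, ht3⟩ y ⟨hy0, hy.2⟩ ht2.le
        refine h.trans (mul_le_mul_of_nonneg_left ?_ hC)
        exact Real.rpow_le_rpow (by linarith) (by linarith) hα0.le
      · have hGx : G x = g x := hG x ⟨hx0, hx.2⟩
        rw [hGx, hGy, abs_of_nonneg (by linarith : (0:ℝ) ≤ y - x)]
        exact key x ⟨hx0, hx.2⟩ y ⟨hy0, hy.2⟩ hxy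
  intro x hx y hy
  rcases le_total x y with h | h
  · exact main x hx y hy h
  · rw [abs_sub_comm (G y), abs_sub_comm y]
    exact main y hy x hx h
end
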